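/- Lower containment of Hölder space in interpolation space, order 0: if u ∈ (C, C^{1,0}_B)_{α,∞} for some 0 < α < 1, then u ∈ C^{0,α}_B and ‖u‖_{C^{0,α}_B} ≤ C ‖u‖_{(C, C^{1,0}_B)_{α,∞}}; in particular, for every z, δ ≠ 0 and i ≤ p₀: |u(e^{δ∂_{x_i}}z) − u(z)| ≤ 2|δ|^α ‖u‖_{(C,C^{1,0}_B)_{α,∞}} and |u(e^{δY}z) − u(z)| ≤ 2|δ|^{α/2} ‖u‖_{(C,C^{1,0}_B)_{α,∞}}. -/

import Mathlib

open ENNReal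

/-- Functions on `ℝ^{d+1} = ℝ × ℝ^d`. -/
abbrev KFun (d : ℕ) := ℝ × (Fin d → ℝ) → ℝ

/-- The flow of `∂_{x_i}`: `e^{δ∂_{x_i}}(t,x) = (t, x + δ e_i)`. -/
def flowX {d : ℕ} (i : Fin d) (δ : ℝ) (z : ℝ × (Fin d → ℝ)) : ℝ × (Fin d → ℝ) :=
  (z.1, z.2 + δ • (Pi.single i 1 : Fin d → ℝ))

/-- The flow of `Y`: `e^{δY}(t,x) = (t+δ, e^{δB}x)`. -/
noncomputable def flowY {d : ℕ} (B : Matrix (Fin d) (Fin d) ℝ)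
    (δ : ℝ) (z : ℝ × (Fin d → ℝ)) : ℝ × (Fin d → ℝ) :=
  (z.1 + δ, (NormedSpace.exp (δ • B)).mulVec z.2)

/-- Supremum norm, valued in `ℝ≥0∞`. -/
noncomputable def eSup {d : ℕ} (u : KFun d) : ℝ≥0∞ :=
  ⨆ z, (‖u z‖₊ : ℝ≥0∞)

/-- Hölder seminorm of exponent `β` along the flow `Φ`:
`sup_{z, δ ≠ 0} |u(Φ_δ z) − u(z)| / |δ|^β`. -/
noncomputable def eHol {d : ℕ} (Φ : ℝ → ℝ × (Fin d → ℝ) → ℝ × (Fin d → ℝ))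
    (β : ℝ) (u : KFun d) : ℝ≥0∞ :=
  ⨆ z, ⨆ δ : ℝ,
    if δ = 0 then 0 else (‖u (Φ δ z) - u z‖₊ : ℝ≥0∞) / ENNReal.ofReal (|δ| ^ β)

/-- `u ∈ C`: bounded and continuous. -/
def MemC {d : ℕ} (u : KFun d) : Prop := Continuous u ∧ eSup u < ⊤

/-- The derivative `∂_{x_i} u`. -/
noncomputable def derX {d : ℕ} (i : Fin d) (u : KFun d) : KFun d :=
  fun z => deriv (fun s => u (flowX i s z)) 0

/-- `u ∈ C^{1,0}_B`: `u ∈ C`, `[u]_{C^{1/2}_Y} < ∞`, and `∂_{x_i} u ∈ C` for `i ≤ p₀`. -/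
def MemC10 {d : ℕ} (p₀ : ℕ) (B : Matrix (Fin d) (Fin d) ℝ) (u : KFun d) : Prop :=
  MemC u ∧ eHol (flowY B) ((1 : ℝ) / 2) u < ⊤ ∧
    ∀ i : Fin d, (i : ℕ) < p₀ →
      (∀ z, DifferentiableAt ℝ (fun s => u (flowX i s z)) 0) ∧ MemC (derX i u)

/-- The `C^{1,0}_B` norm: `|u|_∞ + [u]_{C^{1/2}_Y} + Σ_{i ≤ p₀} |∂_{x_i}u|_∞`. -/
noncomputable def normC10 {d : ℕ} (p₀ : ℕ) (B : Matrix (Fin d) (Fin d) ℝ)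
    (u : KFun d) : ℝ≥0∞ :=
  eSup u + eHol (flowY B) ((1 : ℝ) / 2) u +
    ∑ i : Fin d, if (i : ℕ) < p₀ then eSup (derX i u) else 0

/-- The K-functional `K(λ, u; C, C^{1,0}_B)`. -/
noncomputable def K10 {d : ℕ} (p₀ : ℕ) (B : Matrix (Fin d) (Fin d) ℝ)
    (lam : ℝ) (u : KFun d) : ℝ≥0∞ :=
  ⨅ (b : KFun d) (_ : MemC10 p₀ B b) (_ : MemC (u - b)),
    eSup (u - b) + ENNReal.ofReal lam * normC10 p₀ B b


/-- The `C^{0,α}_B` norm: `|u|_∞ + [u]_{C^{α/2}_Y} + Σ_{i ≤ p₀} [u]_{C^α_{∂_{x_i}}}`. -/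
noncomputable def norm0a {d : ℕ} (p₀ : ℕ) (B : Matrix (Fin d) (Fin d) ℝ)
    (α : ℝ) (u : KFun d) : ℝ≥0∞ :=
  eSup u + eHol (flowY B) (α / 2) u +
    ∑ i : Fin d, if (i : ℕ) < p₀ then eHol (flowX i) α u else 0

/-- The norm of the real interpolation space `(C, C^{1,0}_B)_{α,∞}`:
`sup_{λ>0} λ^{-α} K(λ, u; C, C^{1,0}_B)`. -/
noncomputable def interpNorm {d : ℕ} (p₀ : ℕ) (B : Matrix (Fin d) (Fin d) ℝ)
    (α : ℝ) (u : KFun d) : ℝ≥0∞ :=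
  ⨆ (lam : ℝ), ⨆ (_ : 0 < lam), ENNReal.ofReal (lam ^ (-α)) * K10 p₀ B lam u

private lemma flowX_comp {d : ℕ} (i : Fin d) (s h : ℝ) (z : ℝ × (Fin d → ℝ)) :
    flowX i h (flowX i s z) = flowX i (s + h) z := by
  simp [flowX, add_smul, add_assoc]

private lemma flowX_zero {d : ℕ} (i : Fin d) (z : ℝ × (Fin d → ℝ)) :
    flowX i 0 z = z := by simp [flowX]

private lemma mvtX {d : ℕ} (i : Fin d) (b : KFun d)
    (hd : ∀ z, DifferentiableAt ℝ (fun s => b (flowX i s z)) 0)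
    {C : ℝ} (hC : ∀ w, ‖derX i b w‖ ≤ C) (z : ℝ × (Fin d → ℝ)) (δ : ℝ) :
    ‖b (flowX i δ z) - b z‖ ≤ C * |δ| := by
  set g : ℝ → ℝ := fun s => b (flowX i s z) with hg
  have hder : ∀ s : ℝ, HasDerivAt g (derX i b (flowX i s z)) s := by
    intro s
    have heq : (fun h => b (flowX i h (flowX i s z))) = fun h => g (s + h) := by
      funext h; rw [flowX_comp]
    have h1 : DifferentiableAt ℝ (fun h => g (s + h)) 0 := heq ▸ hd (flowX i s z)
    have hder_eq : derX i b (flowX i s z) = deriv (fun h => g (s + h)) 0 := by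
      rw [derX, heq]
    have h2 : HasDerivAt (fun h => g (s + h)) (deriv (fun h => g (s + h)) 0) 0 :=
      h1.hasDerivAt
    have h4 := HasDerivAt.comp_const_add (f := fun h => g (s + h))
      (f' := deriv (fun h => g (s + h)) 0) (-s) s (by simpa using h2)
    have h5 : (fun x : ℝ => g (s + (-s + x))) = g := by
      funext x; congr 1; ring
    rw [h5, ← hder_eq] at h4
    exact h4
  have key := Convex.norm_image_sub_le_of_norm_hasDerivWithin_le
      (f := g) (f' := fun s => derX i b (flowX i s z)) (s := Set.univ)
      (fun x _ => (hder x).hasDerivWithinAt) (fun x _ => hC _) convex_univ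
      (Set.mem_univ 0) (Set.mem_univ δ)
  simpa [hg, flowX_zero, Real.norm_eq_abs] using key

private lemma coe_le_eSup {d : ℕ} (f : KFun d) (z : ℝ × (Fin d → ℝ)) :
    (‖f z‖₊ : ℝ≥0∞) ≤ eSup f := le_iSup (fun z => (‖f z‖₊ : ℝ≥0∞)) z

private lemma K_le {d : ℕ} (p₀ : ℕ) (B : Matrix (Fin d) (Fin d) ℝ) {α : ℝ}
    (u : KFun d) {lam : ℝ} (hlam : 0 < lam) :
    K10 p₀ B lam u ≤ ENNReal.ofReal (lam ^ α) * interpNorm p₀ B α u := by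
  have h1 : ENNReal.ofReal (lam ^ (-α)) * K10 p₀ B lam u ≤ interpNorm p₀ B α u := by
    rw [interpNorm]
    exact le_iSup₂ (f := fun (lam : ℝ) (_ : 0 < lam) =>
      ENNReal.ofReal (lam ^ (-α)) * K10 p₀ B lam u) lam hlam
  have h2 : ENNReal.ofReal (lam ^ α) * ENNReal.ofReal (lam ^ (-α)) = 1 := by
    rw [← ENNReal.ofReal_mul (Real.rpow_nonneg hlam.le _), ← Real.rpow_add hlam]
    simp
  calc K10 p₀ B lam u
      = ENNReal.ofReal (lam ^ α) * (ENNReal.ofReal (lam ^ (-α)) * K10 p₀ B lam u) := by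
        rw [← mul_assoc, h2, one_mul]
    _ ≤ _ := mul_le_mul_right h1 _

private lemma inc_le {d : ℕ} (p₀ : ℕ) (B : Matrix (Fin d) (Fin d) ℝ) {α : ℝ}
    (u : KFun d) {lam : ℝ} (hlam : 0 < lam) (a : ℝ≥0∞)
    (h : ∀ b, MemC10 p₀ B b → MemC (u - b) →
      a ≤ 2 * (eSup (u - b) + ENNReal.ofReal lam * normC10 p₀ B b)) :
    a ≤ 2 * ENNReal.ofReal (lam ^ α) * interpNorm p₀ B α u := by
  have hK : a / 2 ≤ K10 p₀ B lam u := by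
    rw [K10]
    exact le_iInf fun b => le_iInf fun hb => le_iInf fun hub =>
      ENNReal.div_le_of_le_mul' (h b hb hub)
  calc a = 2 * (a / 2) := (ENNReal.mul_div_cancel' (by norm_num) (by norm_num)).symm
    _ ≤ 2 * K10 p₀ B lam u := mul_le_mul_right hK _
    _ ≤ 2 * (ENNReal.ofReal (lam ^ α) * interpNorm p₀ B α u) :=
        mul_le_mul_right (K_le p₀ B u hlam) _
    _ = _ := (mul_assoc _ _ _).symm

/-- If `u ∈ (C, C^{1,0}_B)_{α,∞}` for `0 < α < 1`, then `u ∈ C^{0,α}_B` with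
`‖u‖_{C^{0,α}_B} ≤ C ‖u‖_{(C,C^{1,0}_B)_{α,∞}}`; in particular for every `z`, `δ ≠ 0`
and `i ≤ p₀`: `|u(e^{δ∂_{x_i}}z) − u(z)| ≤ 2|δ|^α ‖u‖_{(C,C^{1,0}_B)_{α,∞}}` and
`|u(e^{δY}z) − u(z)| ≤ 2|δ|^{α/2} ‖u‖_{(C,C^{1,0}_B)_{α,∞}}`. -/
theorem stmt17 {d : ℕ} (p₀ : ℕ) (B : Matrix (Fin d) (Fin d) ℝ)
    (α : ℝ) (hα0 : 0 < α) (hα1 : α < 1)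
    (u : KFun d) (hu : MemC u) (hfin : interpNorm p₀ B α u < ⊤) :
    (∀ (i : Fin d), (i : ℕ) < p₀ → ∀ (z : ℝ × (Fin d → ℝ)) (δ : ℝ), δ ≠ 0 →
      (‖u (flowX i δ z) - u z‖₊ : ℝ≥0∞)
        ≤ 2 * ENNReal.ofReal (|δ| ^ α) * interpNorm p₀ B α u) ∧
    (∀ (z : ℝ × (Fin d → ℝ)) (δ : ℝ), δ ≠ 0 →
      (‖u (flowY B δ z) - u z‖₊ : ℝ≥0∞)
        ≤ 2 * ENNReal.ofReal (|δ| ^ (α / 2)) * interpNorm p₀ B α u) ∧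
    (∃ C : ℝ, 0 < C ∧ norm0a p₀ B α u ≤ ENNReal.ofReal C * interpNorm p₀ B α u) := by
  set I := interpNorm p₀ B α u with hI
  -- Generic triangle step
  have tri : ∀ (b : KFun d) (w z : ℝ × (Fin d → ℝ)),
      (‖u w - u z‖₊ : ℝ≥0∞)
        ≤ (eSup (u - b) + eSup (u - b)) + (‖b w - b z‖₊ : ℝ≥0∞) := by
    intro b w z
    have he : u w - u z = ((u - b) w - (u - b) z) + (b w - b z) := by
      simp only [Pi.sub_apply]; ring
    calc (‖u w - u z‖₊ : ℝ≥0∞)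
        ≤ (‖(u - b) w - (u - b) z‖₊ : ℝ≥0∞) + (‖b w - b z‖₊ : ℝ≥0∞) := by
          rw [he]; exact_mod_cast nnnorm_add_le _ _
      _ ≤ ((‖(u - b) w‖₊ : ℝ≥0∞) + (‖(u - b) z‖₊ : ℝ≥0∞)) + (‖b w - b z‖₊ : ℝ≥0∞) := by
          gcongr
          exact_mod_cast nnnorm_sub_le _ _
      _ ≤ _ := by gcongr <;> exact coe_le_eSup _ _
  have comb : ∀ (A B' C' : ℝ≥0∞), C' ≤ B' → (A + A) + C' ≤ 2 * (A + B') := by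
    intro A B' C' hCB
    calc (A + A) + C' ≤ (A + A) + (B' + B') := by
          gcongr
          exact le_trans hCB (self_le_add_right _ _)
      _ = 2 * (A + B') := by ring
  -- Part 1: increments along flowX
  have hXinc : ∀ (i : Fin d), (i : ℕ) < p₀ → ∀ (z : ℝ × (Fin d → ℝ)) (δ : ℝ), δ ≠ 0 →
      (‖u (flowX i δ z) - u z‖₊ : ℝ≥0∞) ≤ 2 * ENNReal.ofReal (|δ| ^ α) * I := by
    intro i hi z δ hδ
    have habs : (0:ℝ) < |δ| := abs_pos.2 hδ
    refine inc_le p₀ B u habs _ ?_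
    intro b hb hub
    obtain ⟨hbdiff, hbder⟩ := hb.2.2 i hi
    have hCnn : (0:ℝ) ≤ (eSup (derX i b)).toReal := ENNReal.toReal_nonneg
    have hC : ∀ w, ‖derX i b w‖ ≤ (eSup (derX i b)).toReal := by
      intro w
      have h1 : (‖derX i b w‖₊ : ℝ≥0∞) ≤ eSup (derX i b) := coe_le_eSup _ w
      have h2 := ENNReal.toReal_mono hbder.2.ne h1
      simpa using h2
    have hm := mvtX i b hbdiff hC z δ
    have hb2 : (‖b (flowX i δ z) - b z‖₊ : ℝ≥0∞)
        ≤ ENNReal.ofReal |δ| * eSup (derX i b) := by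
      calc (‖b (flowX i δ z) - b z‖₊ : ℝ≥0∞)
          = ENNReal.ofReal ‖b (flowX i δ z) - b z‖ := (ofReal_norm _).symm
        _ ≤ ENNReal.ofReal ((eSup (derX i b)).toReal * |δ|) := ENNReal.ofReal_le_ofReal hm
        _ = ENNReal.ofReal |δ| * ENNReal.ofReal (eSup (derX i b)).toReal := by
            rw [ENNReal.ofReal_mul hCnn, mul_comm]
        _ = ENNReal.ofReal |δ| * eSup (derX i b) := by
            rw [ENNReal.ofReal_toReal hbder.2.ne]
    have hsum : eSup (derX i b) ≤ normC10 p₀ B b := by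
      rw [normC10]
      calc eSup (derX i b) = (if (i:ℕ) < p₀ then eSup (derX i b) else 0) := (if_pos hi).symm
        _ ≤ ∑ j : Fin d, (if (j:ℕ) < p₀ then eSup (derX j b) else 0) :=
            Finset.single_le_sum (f := fun j : Fin d => if (j:ℕ) < p₀ then eSup (derX j b) else 0)
              (fun j _ => zero_le) (Finset.mem_univ i)
        _ ≤ _ := le_add_self
    refine le_trans (tri b _ z) (comb _ _ _ ?_)
    exact le_trans hb2 (mul_le_mul_right hsum _)
  -- Part 2: increments along flowY
  have hYinc : ∀ (z : ℝ × (Fin d → ℝ)) (δ : ℝ), δ ≠ 0 →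
      (‖u (flowY B δ z) - u z‖₊ : ℝ≥0∞) ≤ 2 * ENNReal.ofReal (|δ| ^ (α / 2)) * I := by
    intro z δ hδ
    have habs : (0:ℝ) < |δ| := abs_pos.2 hδ
    have hlam : (0:ℝ) < |δ| ^ ((1:ℝ)/2) := Real.rpow_pos_of_pos habs _
    have hexp : (|δ| ^ ((1:ℝ)/2)) ^ α = |δ| ^ (α / 2) := by
      rw [← Real.rpow_mul (abs_nonneg δ)]
      congr 1; ring
    rw [← hexp]
    refine inc_le p₀ B u hlam _ ?_
    intro b hb hub
    have hterm : (‖b (flowY B δ z) - b z‖₊ : ℝ≥0∞) / ENNReal.ofReal (|δ| ^ ((1:ℝ)/2))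
        ≤ eHol (flowY B) ((1:ℝ)/2) b := by
      rw [eHol]
      have h0 := le_iSup₂ (f := fun (z : ℝ × (Fin d → ℝ)) (δ : ℝ) =>
        if δ = 0 then 0 else
          (‖b (flowY B δ z) - b z‖₊ : ℝ≥0∞) / ENNReal.ofReal (|δ| ^ ((1:ℝ)/2))) z δ
      rwa [if_neg hδ] at h0
    have hb2 : (‖b (flowY B δ z) - b z‖₊ : ℝ≥0∞)
        ≤ eHol (flowY B) ((1:ℝ)/2) b * ENNReal.ofReal (|δ| ^ ((1:ℝ)/2)) :=
      (ENNReal.div_le_iff_le_mul (Or.inl (ENNReal.ofReal_pos.2 hlam).ne')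
        (Or.inl ENNReal.ofReal_ne_top)).1 hterm
    have hhol : eHol (flowY B) ((1:ℝ)/2) b ≤ normC10 p₀ B b := by
      rw [normC10]
      exact le_trans le_add_self (self_le_add_right _ _)
    refine le_trans (tri b _ z) (comb _ _ _ ?_)
    calc (‖b (flowY B δ z) - b z‖₊ : ℝ≥0∞)
        ≤ eHol (flowY B) ((1:ℝ)/2) b * ENNReal.ofReal (|δ| ^ ((1:ℝ)/2)) := hb2
      _ ≤ normC10 p₀ B b * ENNReal.ofReal (|δ| ^ ((1:ℝ)/2)) := mul_le_mul_left hhol _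
      _ = ENNReal.ofReal (|δ| ^ ((1:ℝ)/2)) * normC10 p₀ B b := mul_comm _ _
  -- Part 3: norm bound
  have hsupu : eSup u ≤ I := by
    have h1 : eSup u ≤ K10 p₀ B 1 u := by
      rw [K10]
      refine le_iInf fun b => le_iInf fun hb => le_iInf fun hub => ?_
      have h2 : eSup u ≤ eSup (u - b) + eSup b := by
        refine iSup_le fun z => ?_
        have he : u z = (u - b) z + b z := by simp
        calc (‖u z‖₊ : ℝ≥0∞) ≤ (‖(u - b) z‖₊ : ℝ≥0∞) + (‖b z‖₊ : ℝ≥0∞) := by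
              rw [he]; exact_mod_cast nnnorm_add_le _ _
          _ ≤ _ := add_le_add (coe_le_eSup _ _) (coe_le_eSup _ _)
      refine h2.trans (add_le_add le_rfl ?_)
      have h3 : eSup b ≤ normC10 p₀ B b := by
        rw [normC10]
        exact le_trans (self_le_add_right _ _) (self_le_add_right _ _)
      simpa using h3
    have h4 := K_le p₀ B (α := α) u one_pos
    rw [Real.one_rpow, ENNReal.ofReal_one, one_mul] at h4
    exact h1.trans h4
  have hHolX : ∀ i : Fin d, (i:ℕ) < p₀ → eHol (flowX i) α u ≤ 2 * I := by
    intro i hi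
    rw [eHol]
    refine iSup₂_le fun z δ => ?_
    split_ifs with h
    · exact zero_le
    · refine ENNReal.div_le_of_le_mul' ?_
      calc (‖u (flowX i δ z) - u z‖₊ : ℝ≥0∞)
          ≤ 2 * ENNReal.ofReal (|δ| ^ α) * I := hXinc i hi z δ h
        _ = ENNReal.ofReal (|δ| ^ α) * (2 * I) := by ring
  have hHolY : eHol (flowY B) (α / 2) u ≤ 2 * I := by
    rw [eHol]
    refine iSup₂_le fun z δ => ?_
    split_ifs with h
    · exact zero_le
    · refine ENNReal.div_le_of_le_mul' ?_
      calc (‖u (flowY B δ z) - u z‖₊ : ℝ≥0∞)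
          ≤ 2 * ENNReal.ofReal (|δ| ^ (α / 2)) * I := hYinc z δ h
        _ = ENNReal.ofReal (|δ| ^ (α / 2)) * (2 * I) := by ring
  refine ⟨hXinc, hYinc, 3 + 2 * d, by positivity, ?_⟩
  have hsum0 : (∑ i : Fin d, if (i:ℕ) < p₀ then eHol (flowX i) α u else 0)
      ≤ (d : ℝ≥0∞) * (2 * I) := by
    calc (∑ i : Fin d, if (i:ℕ) < p₀ then eHol (flowX i) α u else 0)
        ≤ ∑ _i : Fin d, 2 * I := by
          refine Finset.sum_le_sum fun j _ => ?_
          split_ifs with h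
          · exact hHolX j h
          · exact zero_le
      _ = (d : ℝ≥0∞) * (2 * I) := by
          simp [Finset.sum_const, nsmul_eq_mul]
  have hofr : ENNReal.ofReal (3 + 2 * (d:ℝ)) = 3 + 2 * (d : ℝ≥0∞) := by
    rw [ENNReal.ofReal_add (by norm_num) (by positivity),
      ENNReal.ofReal_mul (by norm_num)]
    norm_num
  calc norm0a p₀ B α u
      = eSup u + eHol (flowY B) (α / 2) u +
        ∑ i : Fin d, if (i:ℕ) < p₀ then eHol (flowX i) α u else 0 := by rw [norm0a]
    _ ≤ I + 2 * I + (d : ℝ≥0∞) * (2 * I) := by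
        exact add_le_add (add_le_add hsupu hHolY) hsum0
    _ = (3 + 2 * (d : ℝ≥0∞)) * I := by ring
    _ = ENNReal.ofReal (3 + 2 * (d:ℝ)) * I := by rw [hofr]
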